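/- arXiv:1702.08841 — 2 statements merged into one kernel-verified Lean document; each statement's English description precedes it below -/
import Mathlib

section
/- For every clopen subset L of X and every k ∈ S, the set {μ ∈ Meas_S(X) : μ(L) = k} is the topological closure in Meas_S(X) of the set {∫f : f ∈ X →₀ S, Σ_{x ∈ L} f(x) = k}. -/
open TopologicalSpace

/-- An `S`-valued measure on a topological space `X`: a finitely additive function from
the Boolean algebra of clopen subsets of `X` to `S`. -/
def IsSMeasure (S : Type*) [Semiring S] (X : Type*) [TopologicalSpace X]
    (μ : Clopens X → S) : Prop :=
  μ ⊥ = 0 ∧ ∀ K L : Clopens X, K ⊓ L = ⊥ → μ (K ⊔ L) = μ K + μ L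

/-- The space `Meas_S(X)` of all `S`-valued measures on `X`, topologized as a subspace of
the product space `Clopens X → S` (with `S` carrying a topology, which below is assumed
to be the discrete one). -/
abbrev SMeas (S : Type*) [Semiring S] [TopologicalSpace S]
    (X : Type*) [TopologicalSpace X] : Type _ :=
  {μ : Clopens X → S // IsSMeasure S X μ}

open scoped Classical in
/-- The integral `∫ f` of a finitely supported function `f : X →₀ S`: the `S`-valued
measure sending a clopen `K` to `Σ_{x ∈ K} f x`. -/
noncomputable def sInt {S : Type*} [Semiring S] {X : Type*} [TopologicalSpace X]
    (f : X →₀ S) (K : Clopens X) : S :=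
  ∑ x ∈ f.support, if x ∈ K then f x else 0

section Aux

variable {S : Type*} [CommSemiring S] {X : Type*} [TopologicalSpace X]

@[simp] lemma Clopens.mem_inf' {s t : Clopens X} {x : X} : x ∈ s ⊓ t ↔ x ∈ s ∧ x ∈ t := Iff.rfl
@[simp] lemma Clopens.mem_sup' {s t : Clopens X} {x : X} : x ∈ s ⊔ t ↔ x ∈ s ∨ x ∈ t := Iff.rfl
@[simp] lemma Clopens.mem_compl' {s : Clopens X} {x : X} : x ∈ sᶜ ↔ ¬ x ∈ s := Iff.rfl
@[simp] lemma Clopens.not_mem_bot' {x : X} : ¬ x ∈ (⊥ : Clopens X) := id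
@[simp] lemma Clopens.mem_top' {x : X} : x ∈ (⊤ : Clopens X) := Set.mem_univ x

lemma Clopens.mem_finset_inf {ι : Type*} {s : Finset ι} {A : ι → Clopens X} {x : X} :
    x ∈ s.inf A ↔ ∀ i ∈ s, x ∈ A i := by
  classical
  induction s using Finset.cons_induction with
  | empty => simp
  | cons a s ha ih => simp [Finset.inf_cons, ih]

lemma Clopens.mem_finset_sup {ι : Type*} {s : Finset ι} {A : ι → Clopens X} {x : X} :
    x ∈ s.sup A ↔ ∃ i ∈ s, x ∈ A i := by
  classical
  induction s using Finset.cons_induction with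
  | empty => simp
  | cons a s ha ih => simp [Finset.sup_cons, ih]

open scoped Classical in
noncomputable def sIntHom (K : Clopens X) : (X →₀ S) →+ S :=
  Finsupp.liftAddHom fun x => if x ∈ K then AddMonoidHom.id S else 0

lemma sInt_eq_sIntHom (f : X →₀ S) (K : Clopens X) : sInt f K = sIntHom (S := S) K f := by
  unfold sIntHom
  rw [Finsupp.liftAddHom_apply, sInt, Finsupp.sum]
  refine Finset.sum_congr rfl fun x _ => ?_
  by_cases h : x ∈ K <;> simp [h]

open scoped Classical in
lemma sInt_single (x : X) (s : S) (K : Clopens X) :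
    sInt (Finsupp.single x s) K = if x ∈ K then s else 0 := by
  classical
  rw [sInt_eq_sIntHom]
  unfold sIntHom
  rw [Finsupp.liftAddHom_apply_single]
  by_cases h : x ∈ K <;> simp [h]

lemma sInt_sum {ι : Type*} (s : Finset ι) (g : ι → (X →₀ S)) (K : Clopens X) :
    sInt (∑ i ∈ s, g i) K = ∑ i ∈ s, sInt (g i) K := by
  simp only [sInt_eq_sIntHom (S := S), map_sum]

lemma isSMeasure_sInt (f : X →₀ S) : IsSMeasure S X (sInt f) := by
  classical
  constructor
  · rw [sInt]
    exact Finset.sum_eq_zero fun x _ => by simp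
  · intro K L hKL
    rw [sInt, sInt, sInt, ← Finset.sum_add_distrib]
    refine Finset.sum_congr rfl fun x _ => ?_
    have hx : ¬(x ∈ K ∧ x ∈ L) := by
      intro hx
      exact Clopens.not_mem_bot' (hKL ▸ (Clopens.mem_inf'.mpr hx))
    by_cases h1 : x ∈ K <;> by_cases h2 : x ∈ L <;>
      simp_all [Clopens.mem_sup']

lemma meas_finset_sup {μ : Clopens X → S} (h : IsSMeasure S X μ) {ι : Type*} (s : Finset ι)
    (A : ι → Clopens X) (hd : ∀ i ∈ s, ∀ j ∈ s, i ≠ j → A i ⊓ A j = ⊥) :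
    μ (s.sup A) = ∑ i ∈ s, μ (A i) := by
  classical
  induction s using Finset.cons_induction with
  | empty => simpa using h.1
  | cons a s ha ih =>
    rw [Finset.sup_cons, Finset.sum_cons,
      ← ih (fun i hi j hj hij => hd i (by simp [hi]) j (by simp [hj]) hij)]
    refine h.2 _ _ ?_
    rw [← disjoint_iff, Finset.disjoint_sup_right]
    intro i hi
    rw [disjoint_iff]
    exact hd a (by simp) i (by simp [hi]) (fun he => ha (he ▸ hi))

/-- Main construction: approximate a measure on finitely many clopens by an integral. -/
lemma exists_finsupp (μ : Clopens X → S) (h : IsSMeasure S X μ) (F : Finset (Clopens X)) :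
    ∃ f : X →₀ S, ∀ K ∈ F, sInt f K = μ K := by
  classical
  set cell : (↥F → Bool) → Clopens X :=
    fun ε => F.attach.inf fun K => if ε K then (K : Clopens X) else (K : Clopens X)ᶜ with hcell
  have hle : ∀ (ε : ↥F → Bool) (K : ↥F),
      cell ε ≤ (if ε K then (K : Clopens X) else (K : Clopens X)ᶜ) :=
    fun ε K => Finset.inf_le (Finset.mem_attach _ K)
  have hdisj : ∀ ε ε' : ↥F → Bool, ε ≠ ε' → cell ε ⊓ cell ε' = ⊥ := by
    intro ε ε' hne
    obtain ⟨K, hK⟩ : ∃ K, ε K ≠ ε' K := by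
      by_contra hc; push_neg at hc; exact hne (funext hc)
    rw [← le_bot_iff]
    cases hb : ε K <;> cases hb' : ε' K <;> rw [hb, hb'] at hK <;> try exact absurd rfl hK
    · calc cell ε ⊓ cell ε' ≤ (K : Clopens X)ᶜ ⊓ (K : Clopens X) := by
            refine inf_le_inf ?_ ?_
            · simpa [hb] using hle ε K
            · simpa [hb'] using hle ε' K
        _ = ⊥ := by rw [inf_comm, inf_compl_eq_bot]
    · calc cell ε ⊓ cell ε' ≤ (K : Clopens X) ⊓ (K : Clopens X)ᶜ := by
            refine inf_le_inf ?_ ?_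
            · simpa [hb] using hle ε K
            · simpa [hb'] using hle ε' K
        _ = ⊥ := inf_compl_eq_bot
  -- pick a point in each nonempty cell
  have hpt : ∀ ε : ↥F → Bool, cell ε ≠ ⊥ → ∃ x, x ∈ cell ε := by
    intro ε hε
    by_contra hc; push_neg at hc
    exact hε (le_bot_iff.mp fun x hx => absurd hx (hc x))
  choose pt hptmem using hpt
  refine ⟨∑ ε : ↥F → Bool, if hε : cell ε ≠ ⊥ then
      Finsupp.single (pt ε hε) (μ (cell ε)) else 0, ?_⟩
  intro K hKF
  -- partition of K into cells
  have hpart : (Finset.univ.filter fun ε : ↥F → Bool => ε ⟨K, hKF⟩ = true).sup cell = K := by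
    apply le_antisymm
    · refine Finset.sup_le fun ε hε => ?_
      simpa [(Finset.mem_filter.mp hε).2] using hle ε ⟨K, hKF⟩
    · intro x hx
      rw [Clopens.mem_finset_sup]
      refine ⟨fun J : ↥F => decide (x ∈ (J : Clopens X)), ?_, ?_⟩
      · refine Finset.mem_filter.mpr ⟨Finset.mem_univ _, decide_eq_true ?_⟩
        exact hx
      · rw [hcell, Clopens.mem_finset_inf]
        intro J _
        by_cases hJ : x ∈ (J : Clopens X) <;> simp [hJ]
  have hμK : μ K = ∑ ε : ↥F → Bool,
      if ε ⟨K, hKF⟩ = true ∧ cell ε ≠ ⊥ then μ (cell ε) else 0 := by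
    conv_lhs => rw [← hpart]
    rw [meas_finset_sup h _ _
      (fun i _ j _ hij => hdisj i j hij), Finset.sum_filter]
    refine Finset.sum_congr rfl fun ε _ => ?_
    by_cases h1 : ε ⟨K, hKF⟩ = true <;> by_cases h2 : cell ε ≠ ⊥ <;>
      simp_all [h.1]
  rw [hμK, sInt_sum]
  refine Finset.sum_congr rfl fun ε _ => ?_
  by_cases hε : cell ε ≠ ⊥
  · rw [dif_pos hε, sInt_single]
    by_cases h1 : ε ⟨K, hKF⟩ = true
    · have hmem : pt ε hε ∈ K := by
        have := hle ε ⟨K, hKF⟩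
        rw [h1, if_pos rfl] at this
        exact this (hptmem ε hε)
      rw [if_pos hmem, if_pos ⟨h1, hε⟩]
    · have hmem : ¬ pt ε hε ∈ K := by
        have h2 := hle ε ⟨K, hKF⟩
        rw [if_neg h1] at h2
        exact (Clopens.mem_compl'.mp (h2 (hptmem ε hε)))
      rw [if_neg hmem, if_neg (fun hc => h1 hc.1)]
  · rw [dif_neg hε, if_neg (fun hc => hε hc.2)]
    show sInt 0 K = 0
    rw [sInt_eq_sIntHom, map_zero]

end Aux

/-- For every clopen subset `L` of `X` and every `k ∈ S`, the set
`{μ ∈ Meas_S(X) : μ L = k}` is the topological closure in `Meas_S(X)` of the set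
`{∫ f : f ∈ X →₀ S, Σ_{x ∈ L} f x = k}`. -/
theorem closure_sInt_eq (S X : Type*) [CommSemiring S] [Finite S]
    [TopologicalSpace S] [DiscreteTopology S]
    [TopologicalSpace X] [CompactSpace X] [T2Space X] [TotallyDisconnectedSpace X]
    (L : Clopens X) (k : S) :
    closure {μ : SMeas S X | ∃ f : X →₀ S,
        (∀ K : Clopens X, μ.1 K = sInt f K) ∧ sInt f L = k} =
      {μ : SMeas S X | μ.1 L = k} := by
  apply Set.Subset.antisymm
  · apply closure_minimal
    · rintro μ ⟨f, hf, hfL⟩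
      show μ.1 L = k
      rw [hf L, hfL]
    · have hc : Continuous (fun μ : SMeas S X => μ.1 L) :=
        (continuous_apply L).comp continuous_subtype_val
      exact IsClosed.preimage hc (isClosed_discrete {k})
  · classical
    intro μ hμ
    rw [mem_closure_iff]
    intro o ho hμo
    obtain ⟨W, hW, rfl⟩ := isOpen_induced_iff.mp ho
    obtain ⟨I, u, hu, hsub⟩ := isOpen_pi_iff.mp hW μ.1 hμo
    obtain ⟨f, hf⟩ := exists_finsupp μ.1 μ.2 (insert L I)
    refine ⟨⟨sInt f, isSMeasure_sInt f⟩, ?_, ?_⟩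
    · show (sInt f) ∈ W
      apply hsub
      intro i hi
      rw [hf i (Finset.mem_insert_of_mem hi)]
      exact (hu i hi).2
    · exact ⟨f, fun K => rfl, by rw [hf L (Finset.mem_insert_self L I)]; exact hμ⟩
end

section
/- Let S be a finite commutative semiring and let ℬ be a Boolean subalgebra of the powerset of (A×2)* that is closed under quotients. Let ℬ' be the Boolean subalgebra of the powerset of A* generated by the languages Q_k(L) for k ∈ S and L ∈ ℬ together with the languages L₀ := {w ∈ A* : w₀ ∈ L} for L ∈ ℬ. Then ℬ' is closed under quotients. -/
/-- The word over the marked alphabet `A × Bool` obtained from `w ∈ A*` by marking no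
letter (`w₀` in the paper). -/
def unmarked {A : Type*} (w : FreeMonoid A) : FreeMonoid (A × Bool) :=
  FreeMonoid.map (fun a => (a, false)) w

/-- The word over the marked alphabet `A × Bool` obtained from `w ∈ A*` by marking exactly
the letter in (0-based) position `i` (`w⁽ⁱ⁾` in the paper, with 1-based indexing). -/
def markAt {A : Type*} (w : FreeMonoid A) (i : ℕ) : FreeMonoid (A × Bool) :=
  FreeMonoid.ofList (w.toList.mapIdx fun j a => (a, j == i))

/-- The quantified language `Q_k(L) ⊆ A*`, for `L ⊆ (A×2)*` and `k ∈ S`: it consists of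
the words `w` such that `m · 1_S = k` in `S`, where `m` is the number of positions `i` of
`w` with `w⁽ⁱ⁾ ∈ L`. -/
def Qlang (S : Type*) [Semiring S] {A : Type*} (k : S) (L : Set (FreeMonoid (A × Bool))) :
    Set (FreeMonoid A) :=
  {w | ({i | i < w.toList.length ∧ markAt w i ∈ L}.ncard : S) = k}

/-- Membership in the Boolean subalgebra of `Set α` generated by a family `G` of subsets
of `α`. -/
inductive BoolGen {α : Type*} (G : Set (Set α)) : Set α → Prop
  | basic {s : Set α} : s ∈ G → BoolGen G s
  | empty : BoolGen G ∅
  | compl {s : Set α} : BoolGen G s → BoolGen G sᶜ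
  | union {s t : Set α} : BoolGen G s → BoolGen G t → BoolGen G (s ∪ t)

section helpers

lemma mapIdx_eq_map_of {α β : Type*} {l : List α} {f : ℕ → α → β} {g : α → β}
    (h : ∀ j a, j < l.length → f j a = g a) : l.mapIdx f = l.map g := by
  apply List.ext_getElem (by simp)
  intro n h1 h2
  simp only [List.getElem_mapIdx, List.getElem_map]
  exact h n _ (by simpa using h1)

lemma mapIdx_congr' {α β : Type*} {l : List α} {f g : ℕ → α → β}
    (h : ∀ j a, j < l.length → f j a = g j a) : l.mapIdx f = l.mapIdx g := by
  apply List.ext_getElem (by simp)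
  intro n h1 h2
  simp only [List.getElem_mapIdx]
  exact h n _ (by simpa using h1)

lemma unmarked_mul {A : Type*} (u w : FreeMonoid A) :
    unmarked (u * w) = unmarked u * unmarked w := map_mul _ u w

lemma unmarked_eq {A : Type*} (w : FreeMonoid A) :
    unmarked w = FreeMonoid.ofList (w.toList.map fun a => (a, false)) := by
  rw [← FreeMonoid.toList_map]; rfl

lemma markAt_mul_left {A : Type*} (u w : FreeMonoid A) {i : ℕ} (h : i < u.toList.length) :
    markAt (u * w) i = markAt u i * unmarked w := by
  unfold markAt
  rw [FreeMonoid.toList_mul, List.mapIdx_append, FreeMonoid.ofList_append, unmarked_eq]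
  congr 1
  congr 1
  apply mapIdx_eq_map_of
  intro j a hj
  have : (j + u.toList.length == i) = false := by simp; omega
  rw [this]

lemma markAt_mul_right {A : Type*} (u w : FreeMonoid A) {i : ℕ} (h : u.toList.length ≤ i) :
    markAt (u * w) i = unmarked u * markAt w (i - u.toList.length) := by
  unfold markAt
  rw [FreeMonoid.toList_mul, List.mapIdx_append, FreeMonoid.ofList_append, unmarked_eq]
  congr 1
  · congr 1
    apply mapIdx_eq_map_of
    intro j a hj
    have : (j == i) = false := by simp; omega
    rw [this]
  · congr 1
    apply mapIdx_congr'
    intro j a hj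
    have : (j + u.toList.length == i) = (j == i - u.toList.length) := by
      rw [Bool.eq_iff_iff]; simp; omega
    rw [this]

lemma toList_length_mul {A : Type*} (u w : FreeMonoid A) :
    (u * w).toList.length = u.toList.length + w.toList.length := by
  rw [FreeMonoid.toList_mul, List.length_append]

lemma BoolGen.univ' {α : Type*} {G : Set (Set α)} : BoolGen G Set.univ := by
  have := BoolGen.compl (BoolGen.empty (G := G))
  simpa using this

lemma BoolGen.inter {α : Type*} {G : Set (Set α)} {s t : Set α}
    (hs : BoolGen G s) (ht : BoolGen G t) : BoolGen G (s ∩ t) := by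
  have := (hs.compl.union ht.compl).compl
  simpa [Set.compl_union] using this

lemma BoolGen.biUnion {α β : Type*} {G : Set (Set α)} (t : Finset β) (f : β → Set α)
    (h : ∀ b ∈ t, BoolGen G (f b)) : BoolGen G (⋃ b ∈ t, f b) := by
  classical
  induction t using Finset.induction with
  | empty => simpa using BoolGen.empty
  | @insert a s ha ih =>
      rw [Finset.set_biUnion_insert]
      exact (h a (Finset.mem_insert_self a s)).union
        (ih fun b hb => h b (Finset.mem_insert_of_mem hb))

lemma BoolGen.biInter {α β : Type*} {G : Set (Set α)} (t : Finset β) (f : β → Set α)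
    (h : ∀ b ∈ t, BoolGen G (f b)) : BoolGen G (⋂ b ∈ t, f b) := by
  classical
  induction t using Finset.induction with
  | empty => simpa using BoolGen.univ'
  | @insert a s ha ih =>
      rw [Finset.set_biInter_insert]
      exact (h a (Finset.mem_insert_self a s)).inter
        (ih fun b hb => h b (Finset.mem_insert_of_mem hb))

open Finset in
lemma card_filter_range_add (a b : ℕ) (P : ℕ → Prop) [DecidablePred P] :
    ((range (a + b)).filter P).card
      = ((range a).filter P).card + ((range b).filter (fun j => P (a + j))).card := by
  classical
  induction b with
  | zero => simp
  | succ b ih =>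
      have : a + (b + 1) = (a + b) + 1 := by omega
      rw [this, Finset.range_add_one, Finset.filter_insert,
        Finset.range_add_one (n := b), Finset.filter_insert]
      by_cases h : P (a + b)
      · rw [if_pos h, if_pos h, Finset.card_insert_of_notMem (by simp),
          Finset.card_insert_of_notMem (by simp), ih]
        omega
      · rw [if_neg h, if_neg h, ih]

open Finset in
lemma ncard_setOf_lt_and (n : ℕ) (P : ℕ → Prop) [DecidablePred P] :
    {i | i < n ∧ P i}.ncard = ((range n).filter P).card := by
  rw [← Set.ncard_coe_finset]
  congr 1
  ext i
  simp [Finset.mem_filter, Finset.mem_range]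

end helpers

/-- Let `S` be a finite commutative semiring and `ℬ` a Boolean subalgebra
of the powerset of `(A×2)*` closed under quotients.  Let `ℬ'` be the Boolean subalgebra of
the powerset of `A*` generated by the languages `Q_k(L)` (`k ∈ S`, `L ∈ ℬ`) together with
the languages `L₀ = {w : w₀ ∈ L}` (`L ∈ ℬ`).  Then `ℬ'` is closed under quotients. -/


theorem BoolGen_quant_closed_under_quotients (S : Type*) [CommSemiring S] [Finite S]
    {A : Type*} [Finite A] (ℬ : Set (Set (FreeMonoid (A × Bool))))
    (hempty : ∅ ∈ ℬ)
    (hcompl : ∀ L ∈ ℬ, Lᶜ ∈ ℬ)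
    (hunion : ∀ L ∈ ℬ, ∀ L' ∈ ℬ, L ∪ L' ∈ ℬ)
    (hquot : ∀ L ∈ ℬ, ∀ u v : FreeMonoid (A × Bool), {w | u * w * v ∈ L} ∈ ℬ) :
    ∀ L' : Set (FreeMonoid A),
      BoolGen ({T | ∃ k : S, ∃ L ∈ ℬ, T = Qlang S k L} ∪
          {T | ∃ L ∈ ℬ, T = {w | unmarked w ∈ L}}) L' →
        ∀ u v : FreeMonoid A,
          BoolGen ({T | ∃ k : S, ∃ L ∈ ℬ, T = Qlang S k L} ∪
              {T | ∃ L ∈ ℬ, T = {w | unmarked w ∈ L}}) {w | u * w * v ∈ L'} := by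
  classical
  set G : Set (Set (FreeMonoid A)) := ({T | ∃ k : S, ∃ L ∈ ℬ, T = Qlang S k L} ∪
      {T | ∃ L ∈ ℬ, T = {w | unmarked w ∈ L}}) with hG
  intro L' hL'
  induction hL' with
  | empty =>
      intro u v
      have : {w : FreeMonoid A | u * w * v ∈ (∅ : Set (FreeMonoid A))} = ∅ := by
        ext w; simp
      rw [this]
      exact BoolGen.empty
  | @compl s hs ih =>
      intro u v
      have : {w : FreeMonoid A | u * w * v ∈ sᶜ} = {w | u * w * v ∈ s}ᶜ := rfl
      rw [this]
      exact (ih u v).compl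
  | @union s t hs ht ihs iht =>
      intro u v
      have : {w : FreeMonoid A | u * w * v ∈ s ∪ t} = {w | u * w * v ∈ s} ∪ {w | u * w * v ∈ t} := rfl
      rw [this]
      exact (ihs u v).union (iht u v)
  | @basic s hmem =>
      intro u v
      rcases hmem with hQ | h0
      case inr =>
        obtain ⟨L, hL, rfl⟩ := h0
        have heq : {w : FreeMonoid A | u * w * v ∈ {w | unmarked w ∈ L}}
            = {w | unmarked w ∈ {x | unmarked u * x * unmarked v ∈ L}} := by
          ext w
          simp only [Set.mem_setOf_eq, unmarked_mul]
        rw [heq]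
        exact BoolGen.basic (Or.inr ⟨_, hquot L hL (unmarked u) (unmarked v), rfl⟩)
      case inl =>
        obtain ⟨k, L, hL, rfl⟩ := hQ
        set n₁ := u.toList.length with hn₁
        set n₃ := v.toList.length with hn₃
        set L'' : Set (FreeMonoid (A × Bool)) := {x | unmarked u * x * unmarked v ∈ L} with hL''
        set C : ℕ → Set (FreeMonoid A) :=
          fun i => {w | unmarked w ∈ {x | markAt u i * x * unmarked v ∈ L}} with hC
        set D : ℕ → Set (FreeMonoid A) :=
          fun j => {w | unmarked w ∈ {x | unmarked u * x * markAt v j ∈ L}} with hD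
        haveI : Fintype S := Fintype.ofFinite S
        have key : ∀ w : FreeMonoid A,
            {i | i < (u * w * v).toList.length ∧ markAt (u * w * v) i ∈ L}.ncard
              = ((Finset.range n₁).filter (fun i => w ∈ C i)).card
                + ({j | j < w.toList.length ∧ markAt w j ∈ L''}.ncard
                  + ((Finset.range n₃).filter (fun j => w ∈ D j)).card) := by
          intro w
          set n₂ := w.toList.length with hn₂
          have hlen12 : (u * w).toList.length = n₁ + n₂ := toList_length_mul u w
          have hlen : (u * w * v).toList.length = n₁ + (n₂ + n₃) := by
            rw [toList_length_mul, toList_length_mul]; ring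
          have e1 : ∀ i ∈ Finset.range n₁,
              (markAt (u * w * v) i ∈ L ↔ w ∈ C i) := by
            intro i hi
            rw [Finset.mem_range] at hi
            rw [markAt_mul_left (u * w) v (by omega), markAt_mul_left u w hi]
            exact Iff.rfl
          have e2 : ∀ j ∈ Finset.range n₂,
              (markAt (u * w * v) (n₁ + j) ∈ L ↔ markAt w j ∈ L'') := by
            intro j hj
            rw [Finset.mem_range] at hj
            rw [markAt_mul_left (u * w) v (by omega),
              markAt_mul_right u w (by omega)]
            have : n₁ + j - n₁ = j := by omega
            rw [this]
            exact Iff.rfl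
          have e3 : ∀ j ∈ Finset.range n₃,
              (markAt (u * w * v) (n₁ + (n₂ + j)) ∈ L ↔ w ∈ D j) := by
            intro j hj
            rw [Finset.mem_range] at hj
            rw [markAt_mul_right (u * w) v (by omega), unmarked_mul]
            have : n₁ + (n₂ + j) - (u * w).toList.length = j := by omega
            rw [this]
            exact Iff.rfl
          rw [ncard_setOf_lt_and, hlen, card_filter_range_add n₁ (n₂ + n₃),
            card_filter_range_add n₂ n₃,
            Finset.filter_congr e1, Finset.filter_congr e2, Finset.filter_congr e3,
            ncard_setOf_lt_and]
        have main : {w : FreeMonoid A | u * w * v ∈ Qlang S k L} =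
            ⋃ T₁ ∈ (Finset.range n₁).powerset, ⋃ T₃ ∈ (Finset.range n₃).powerset,
              ⋃ k₂ ∈ (Finset.univ : Finset S),
                (if (((T₁.card + T₃.card : ℕ) : S) + k₂ = k) then
                  ((⋂ i ∈ Finset.range n₁, (if i ∈ T₁ then C i else (C i)ᶜ)) ∩
                   ((⋂ j ∈ Finset.range n₃, (if j ∈ T₃ then D j else (D j)ᶜ)) ∩
                     Qlang S k₂ L''))
                 else ∅) := by
          ext w
          simp only [Set.mem_setOf_eq, Set.mem_iUnion, Qlang]
          constructor
          · intro hw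
            rw [key w] at hw
            refine ⟨(Finset.range n₁).filter (fun i => w ∈ C i),
              Finset.mem_powerset.mpr (Finset.filter_subset _ _),
              (Finset.range n₃).filter (fun j => w ∈ D j),
              Finset.mem_powerset.mpr (Finset.filter_subset _ _),
              ({j | j < w.toList.length ∧ markAt w j ∈ L''}.ncard : S),
              Finset.mem_univ _, ?_⟩
            rw [if_pos]
            · refine ⟨?_, ?_, ?_⟩
              · refine Set.mem_iInter₂.mpr fun i hi => ?_
                by_cases hwc : w ∈ C i
                · rw [if_pos (Finset.mem_filter.mpr ⟨hi, hwc⟩)]; exact hwc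
                · have hni : i ∉ Finset.filter (fun i => w ∈ C i) (Finset.range n₁) :=
                    fun hmem => hwc (Finset.mem_filter.mp hmem).2
                  rw [if_neg hni]; exact hwc
              · refine Set.mem_iInter₂.mpr fun j hj => ?_
                by_cases hwd : w ∈ D j
                · rw [if_pos (Finset.mem_filter.mpr ⟨hj, hwd⟩)]; exact hwd
                · have hnj : j ∉ Finset.filter (fun j => w ∈ D j) (Finset.range n₃) :=
                    fun hmem => hwd (Finset.mem_filter.mp hmem).2
                  rw [if_neg hnj]; exact hwd
              · rfl
            · rw [← hw]; push_cast; ring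
          · rintro ⟨T₁, hT₁, T₃, hT₃, k₂, -, hwE⟩
            by_cases hcond : (((T₁.card + T₃.card : ℕ) : S) + k₂ = k)
            · rw [if_pos hcond] at hwE
              obtain ⟨h1, h2, h3⟩ := hwE
              have hT1eq : (Finset.range n₁).filter (fun i => w ∈ C i) = T₁ := by
                ext i
                simp only [Finset.mem_filter]
                constructor
                · rintro ⟨hi, hwc⟩
                  by_contra hit
                  have := Set.mem_iInter₂.mp h1 i hi
                  rw [if_neg hit] at this
                  exact this hwc
                · intro hit
                  have hi : i ∈ Finset.range n₁ := Finset.mem_powerset.mp hT₁ hit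
                  have := Set.mem_iInter₂.mp h1 i hi
                  rw [if_pos hit] at this
                  exact ⟨hi, this⟩
              have hT3eq : (Finset.range n₃).filter (fun j => w ∈ D j) = T₃ := by
                ext j
                simp only [Finset.mem_filter]
                constructor
                · rintro ⟨hj, hwd⟩
                  by_contra hjt
                  have := Set.mem_iInter₂.mp h2 j hj
                  rw [if_neg hjt] at this
                  exact this hwd
                · intro hjt
                  have hj : j ∈ Finset.range n₃ := Finset.mem_powerset.mp hT₃ hjt
                  have := Set.mem_iInter₂.mp h2 j hj
                  rw [if_pos hjt] at this
                  exact ⟨hj, this⟩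
              have hc₂ : (({j | j < w.toList.length ∧ markAt w j ∈ L''}.ncard : ℕ) : S) = k₂ := h3
              rw [key w, hT1eq, hT3eq]
              push_cast
              rw [hc₂, ← hcond]
              push_cast
              ring
            · rw [if_neg hcond] at hwE
              exact absurd hwE (Set.notMem_empty w)
        rw [main]
        apply BoolGen.biUnion
        intro T₁ _
        apply BoolGen.biUnion
        intro T₃ _
        apply BoolGen.biUnion
        intro k₂ _
        by_cases hcond : (((T₁.card + T₃.card : ℕ) : S) + k₂ = k)
        · rw [if_pos hcond]
          refine BoolGen.inter ?_ (BoolGen.inter ?_ ?_)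
          · apply BoolGen.biInter
            intro i _
            by_cases hit : i ∈ T₁
            · rw [if_pos hit]
              exact BoolGen.basic (Or.inr ⟨_, hquot L hL (markAt u i) (unmarked v), rfl⟩)
            · rw [if_neg hit]
              exact (BoolGen.basic (Or.inr ⟨_, hquot L hL (markAt u i) (unmarked v), rfl⟩)).compl
          · apply BoolGen.biInter
            intro j _
            by_cases hjt : j ∈ T₃
            · rw [if_pos hjt]
              exact BoolGen.basic (Or.inr ⟨_, hquot L hL (unmarked u) (markAt v j), rfl⟩)
            · rw [if_neg hjt]
              exact (BoolGen.basic (Or.inr ⟨_, hquot L hL (unmarked u) (markAt v j), rfl⟩)).compl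
          · exact BoolGen.basic (Or.inl ⟨k₂, L'', hquot L hL (unmarked u) (unmarked v), rfl⟩)
        · rw [if_neg hcond]
          exact BoolGen.empty
end
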